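/- arXiv:2409.16811 — 2 statements merged into one kernel-verified Lean document; each statement's English description precedes it below -/
import Mathlib

section
/- Let H have the shadowed-Rician density f_H (parameters b, Ω, m, α, β, δ) and let I be an independent Gamma(k,η)-distributed random variable; let c > 0. Then for every x ≥ 0, P(cH/I ≤ x) = (α/(Γ(k)η^k)) Σ_{i=0}^∞ Σ_{j=0}^∞ [(m)_i δ^i Γ(i+1) Γ(i+j+k+1) / ((i!)² β^{i+1} Γ(i+j+2))] (βx/c)^{i+j+1} (βx/c + 1/η)^{−(i+j+k+1)}. -/
open MeasureTheory ProbabilityTheory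

/-- Rising factorial (Pochhammer symbol) with real base: `(a)_n = a (a+1) ⋯ (a+n-1)`. -/
noncomputable def rf (a : ℝ) : ℕ → ℝ
  | 0 => 1
  | n + 1 => rf a n * (a + n)

/-- Shadowed-Rician density with parameters `α, β, δ` and positive integer `m`:
`f_H(x) = α e^{-βx} ∑_i (m)_i (δx)^i / (i!)²` for `x > 0`, and `0` otherwise. -/
noncomputable def srDensity (α β δ : ℝ) (m : ℕ) (x : ℝ) : ℝ :=
  if 0 < x then
    α * Real.exp (-β * x) * ∑' i : ℕ, rf (m : ℝ) i * (δ * x) ^ i / ((i.factorial : ℝ)) ^ 2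
  else 0

/-- Gamma(k, η) density: `g(y) = y^(k-1) e^(-y/η) / (Γ(k) η^k)` for `y > 0`, `0` otherwise. -/
noncomputable def gammaDensity (k η : ℝ) (y : ℝ) : ℝ :=
  if 0 < y then y ^ (k - 1) * Real.exp (-y / η) / (Real.Gamma k * η ^ k) else 0

open Real Set intervalIntegral

lemma rf_nonneg {a : ℝ} (ha : 0 ≤ a) (n : ℕ) : 0 ≤ rf a n := by
  induction n with
  | zero => norm_num [rf]
  | succ n ih => exact mul_nonneg ih (add_nonneg ha (Nat.cast_nonneg n))

lemma rf_eq (m' : ℕ) (i : ℕ) :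
    rf ((m' + 1 : ℕ) : ℝ) i = ((m' + i).factorial : ℝ) / (m'.factorial : ℝ) := by
  induction i with
  | zero =>
      simp [rf, div_self (show (m'.factorial:ℝ) ≠ 0 from Nat.cast_ne_zero.2 (Nat.factorial_ne_zero _))]
  | succ i ih =>
      have h1 : ((m' + (i + 1)).factorial : ℝ) = ((m' + i).factorial : ℝ) * ((m' : ℝ) + i + 1) := by
        rw [show m' + (i + 1) = (m' + i) + 1 by omega, Nat.factorial_succ]
        push_cast; ring
      rw [rf, ih, h1]
      push_cast
      ring

lemma choose_le_two_pow (n k : ℕ) : n.choose k ≤ 2 ^ n := by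
  rcases le_or_gt k n with h | h
  · calc n.choose k ≤ ∑ i ∈ Finset.range (n + 1), n.choose i :=
        Finset.single_le_sum (fun i _ => Nat.zero_le _) (Finset.mem_range.2 (by omega))
    _ = 2 ^ n := Nat.sum_range_choose n
  · rw [Nat.choose_eq_zero_of_lt h]; positivity

lemma rf_le (m' i : ℕ) : rf ((m' + 1 : ℕ) : ℝ) i ≤ (2:ℝ) ^ (m' + i) * i.factorial := by
  rw [rf_eq]
  have h := Nat.choose_mul_factorial_mul_factorial (show i ≤ m' + i by omega)
  have h2 : ((m' + i).factorial : ℝ) = ((m' + i).choose i : ℝ) * i.factorial * m'.factorial := by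
    rw [show m' + i - i = m' by omega] at h
    exact_mod_cast h.symm
  have hm : (0:ℝ) < (m'.factorial : ℝ) := by exact_mod_cast Nat.factorial_pos _
  have hc : ((m' + i).choose i : ℝ) ≤ (2:ℝ) ^ (m' + i) := by
    exact_mod_cast choose_le_two_pow (m' + i) i
  rw [h2, mul_div_assoc, div_self hm.ne', mul_one]
  exact mul_le_mul_of_nonneg_right hc (by positivity)

lemma summable_sr {m : ℕ} (hm : 0 < m) {z : ℝ} (hz : 0 ≤ z) :
    Summable (fun i : ℕ => rf (m : ℝ) i * z ^ i / (i.factorial : ℝ) ^ 2) := by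
  obtain ⟨m', rfl⟩ : ∃ m', m = m' + 1 := ⟨m - 1, by omega⟩
  have hsum : Summable (fun i : ℕ => (2:ℝ) ^ m' * ((2 * z) ^ i / i.factorial)) :=
    (Real.summable_pow_div_factorial (2 * z)).mul_left _
  refine Summable.of_nonneg_of_le (fun i => ?_) (fun i => ?_) hsum
  · have := rf_nonneg (show (0:ℝ) ≤ ((m' + 1 : ℕ):ℝ) by positivity) i
    positivity
  · have hfi : (0:ℝ) < (i.factorial : ℝ) := by exact_mod_cast Nat.factorial_pos _
    have h1 : rf ((m' + 1 : ℕ) : ℝ) i * z ^ i ≤ (2:ℝ) ^ (m' + i) * i.factorial * z ^ i :=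
      mul_le_mul_of_nonneg_right (rf_le m' i) (by positivity)
    have hfne : (i.factorial : ℝ) ^ 2 > 0 := by positivity
    calc rf ((m' + 1 : ℕ) : ℝ) i * z ^ i / (i.factorial : ℝ) ^ 2
        ≤ (2:ℝ) ^ (m' + i) * i.factorial * z ^ i / (i.factorial : ℝ) ^ 2 := by gcongr
      _ = (2:ℝ) ^ m' * ((2 * z) ^ i / i.factorial) := by
          rw [pow_add, mul_pow]
          field_simp

lemma integral_pow_exp (β : ℝ) (hβ : 0 < β) (T : ℝ) (n : ℕ) :
    ∫ t in (0:ℝ)..T, t ^ n * Real.exp (-β * t)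
      = n.factorial / β ^ (n + 1) *
          (1 - Real.exp (-β * T) * ∑ r ∈ Finset.range (n + 1), (β * T) ^ r / r.factorial) := by
  induction n with
  | zero =>
      have hder : ∀ t ∈ uIcc (0:ℝ) T, HasDerivAt (fun t => -Real.exp (-β * t) / β)
          (Real.exp (-β * t)) t := by
        intro t _
        have h1 : HasDerivAt (fun t : ℝ => -β * t) (-β) t := by
          simpa using (hasDerivAt_id t).const_mul (-β)
        have := (h1.exp).neg.div_const β
        refine this.congr_deriv ?_
        field_simp
      have hint : IntervalIntegrable (fun t => Real.exp (-β * t)) volume 0 T :=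
        (Real.continuous_exp.comp (continuous_const.mul continuous_id)).intervalIntegrable 0 T
      have := intervalIntegral.integral_eq_sub_of_hasDerivAt hder hint
      simp only [pow_zero, one_mul]
      rw [this]
      simp [Finset.sum_range_one]
      field_simp
      ring
  | succ n ih =>
      have hu : ∀ t ∈ uIcc (0:ℝ) T, HasDerivAt (fun t : ℝ => t ^ (n + 1))
          (((n:ℝ) + 1) * t ^ n) t := by
        intro t _
        simpa using (hasDerivAt_pow (n + 1) t)
      have hv : ∀ t ∈ uIcc (0:ℝ) T, HasDerivAt (fun t => -Real.exp (-β * t) / β)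
          (Real.exp (-β * t)) t := by
        intro t _
        have h1 : HasDerivAt (fun t : ℝ => -β * t) (-β) t := by
          simpa using (hasDerivAt_id t).const_mul (-β)
        have := (h1.exp).neg.div_const β
        refine this.congr_deriv ?_
        field_simp
      have hu' : IntervalIntegrable (fun t : ℝ => ((n:ℝ) + 1) * t ^ n) volume 0 T :=
        (continuous_const.mul (continuous_pow n)).intervalIntegrable 0 T
      have hv' : IntervalIntegrable (fun t => Real.exp (-β * t)) volume 0 T :=
        (Real.continuous_exp.comp (continuous_const.mul continuous_id)).intervalIntegrable 0 T
      have hparts := intervalIntegral.integral_mul_deriv_eq_deriv_mul hu hv hu' hv'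
      rw [hparts]
      have hre : ∀ t : ℝ, ((n:ℝ) + 1) * t ^ n * (-Real.exp (-β * t) / β)
          = (-((n:ℝ) + 1) / β) * (t ^ n * Real.exp (-β * t)) := fun t => by ring
      rw [intervalIntegral.integral_congr (fun t _ => hre t), intervalIntegral.integral_const_mul,
        ih]
      have hs : ∑ r ∈ Finset.range (n + 1 + 1), (β * T) ^ r / (r.factorial : ℝ)
          = (∑ r ∈ Finset.range (n + 1), (β * T) ^ r / (r.factorial : ℝ))
            + (β * T) ^ (n + 1) / ((n+1).factorial : ℝ) := Finset.sum_range_succ _ _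
      have hb : β ≠ 0 := hβ.ne'
      have hf1 : ((n+1).factorial : ℝ) = (n.factorial : ℝ) * ((n:ℝ) + 1) := by
        rw [Nat.factorial_succ]; push_cast; ring
      rw [hs, hf1]
      have hfn : (n.factorial : ℝ) ≠ 0 := Nat.cast_ne_zero.2 (Nat.factorial_ne_zero _)
      field_simp
      ring

lemma summable_tail (n : ℕ) {β T : ℝ} (hβ : 0 ≤ β) (hT : 0 ≤ T) :
    Summable (fun j : ℕ => (n.factorial : ℝ) * β ^ j * T ^ (n + j + 1)
      / ((n + j + 1).factorial : ℝ) * Real.exp (-β * T)) := by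
  have hsum : Summable (fun j : ℕ => (T ^ (n+1) * Real.exp (-β * T)) * ((β * T) ^ j / j.factorial)) :=
    (Real.summable_pow_div_factorial (β * T)).mul_left _
  refine Summable.of_nonneg_of_le (fun j => by positivity) (fun j => ?_) hsum
  have hdvd : (n.factorial * j.factorial : ℕ) ∣ (n + j + 1).factorial :=
    (Nat.factorial_mul_factorial_dvd_factorial_add n j).trans
      (Nat.factorial_dvd_factorial (by omega))
  have hle : (n.factorial : ℝ) * j.factorial ≤ ((n + j + 1).factorial : ℝ) := by
    exact_mod_cast Nat.le_of_dvd (Nat.factorial_pos _) hdvd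
  have hfj : (0:ℝ) < (j.factorial : ℝ) := by exact_mod_cast Nat.factorial_pos _
  have hfn : (0:ℝ) < ((n + j + 1).factorial : ℝ) := by exact_mod_cast Nat.factorial_pos _
  have key : (n.factorial : ℝ) / ((n + j + 1).factorial : ℝ) ≤ 1 / j.factorial := by
    rw [div_le_div_iff₀ hfn hfj]
    linarith
  calc (n.factorial : ℝ) * β ^ j * T ^ (n + j + 1) / ((n + j + 1).factorial : ℝ)
        * Real.exp (-β * T)
      = ((n.factorial : ℝ) / ((n + j + 1).factorial : ℝ))
          * (β ^ j * T ^ (n + j + 1) * Real.exp (-β * T)) := by ring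
    _ ≤ (1 / (j.factorial : ℝ)) * (β ^ j * T ^ (n + j + 1) * Real.exp (-β * T)) := by
        apply mul_le_mul_of_nonneg_right key (by positivity)
    _ = T ^ (n+1) * Real.exp (-β * T) * ((β * T) ^ j / j.factorial) := by
        rw [mul_pow, pow_add, pow_add]
        field_simp
        ring

lemma exp_tail (z : ℝ) (n : ℕ) :
    Real.exp z - ∑ r ∈ Finset.range (n + 1), z ^ r / r.factorial
      = ∑' j : ℕ, z ^ (j + (n + 1)) / ((j + (n + 1)).factorial : ℝ) := by
  have hsum : Summable (fun r : ℕ => z ^ r / (r.factorial : ℝ)) :=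
    Real.summable_pow_div_factorial z
  have hexp : Real.exp z = ∑' r : ℕ, z ^ r / (r.factorial : ℝ) := by
    rw [Real.exp_eq_exp_ℝ, NormedSpace.exp_eq_tsum_div]
  rw [hexp, ← Summable.sum_add_tsum_nat_add (n + 1) hsum]
  ring

lemma integral_pow_exp' {β T : ℝ} (hβ : 0 < β) (hT : 0 ≤ T) (n : ℕ) :
    ∫ t in (0:ℝ)..T, t ^ n * Real.exp (-β * t)
      = ∑' j : ℕ, (n.factorial : ℝ) * β ^ j * T ^ (n + j + 1)
          / ((n + j + 1).factorial : ℝ) * Real.exp (-β * T) := by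
  rw [integral_pow_exp β hβ T n]
  have h1 : 1 - Real.exp (-β * T) * ∑ r ∈ Finset.range (n + 1), (β * T) ^ r / r.factorial
      = Real.exp (-β * T) * (Real.exp (β * T) - ∑ r ∈ Finset.range (n + 1), (β * T) ^ r / r.factorial) := by
    rw [mul_sub, ← Real.exp_add]
    norm_num
  rw [h1, exp_tail (β * T) n, ← tsum_mul_left, ← tsum_mul_left]
  apply tsum_congr
  intro j
  have hj : j + (n + 1) = n + j + 1 := by omega
  rw [hj, mul_pow, show n + j + 1 = (n + 1) + j by omega, pow_add β, pow_add T]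
  have hb : β ≠ 0 := hβ.ne'
  have hfn : (((n + 1) + j).factorial : ℝ) ≠ 0 := Nat.cast_ne_zero.2 (Nat.factorial_ne_zero _)
  field_simp
  ring

lemma srCDF {α β δ : ℝ} {m : ℕ} (hα : 0 ≤ α) (hβ : 0 < β) (hδ : 0 ≤ δ) (hm : 0 < m)
    {T : ℝ} (hT : 0 ≤ T) :
    (volume.withDensity fun t => ENNReal.ofReal (srDensity α β δ m t)) (Iic T)
      = ∑' (i : ℕ) (j : ℕ), ENNReal.ofReal
          (α * rf (m:ℝ) i * δ ^ i / ((i.factorial:ℝ)) ^ 2 *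
            ((i.factorial : ℝ) * β ^ j * T ^ (i + j + 1) / ((i + j + 1).factorial : ℝ)
              * Real.exp (-β * T))) := by
  rw [withDensity_apply _ measurableSet_Iic, ← Set.Iic_union_Ioc_eq_Iic hT,
    lintegral_union measurableSet_Ioc (Set.Iic_disjoint_Ioc le_rfl)]
  have h0 : ∫⁻ t in Iic (0:ℝ), ENNReal.ofReal (srDensity α β δ m t) = 0 := by
    rw [setLIntegral_congr_fun measurableSet_Iic
      (fun t (ht : t ≤ 0) => by
        rw [srDensity, if_neg (not_lt.2 ht), ENNReal.ofReal_zero])]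
    simp
  rw [h0, zero_add]
  have hmain : ∫⁻ t in Ioc 0 T, ENNReal.ofReal (srDensity α β δ m t)
      = ∫⁻ t in Ioc 0 T, ∑' i : ℕ,
          ENNReal.ofReal ((α * rf (m:ℝ) i * δ ^ i / ((i.factorial:ℝ)) ^ 2)
            * (t ^ i * Real.exp (-β * t))) := by
    apply setLIntegral_congr_fun measurableSet_Ioc
    intro t ht
    dsimp only
    rw [srDensity, if_pos ht.1]
    have hsum : Summable (fun i : ℕ => rf (m : ℝ) i * (δ * t) ^ i / (i.factorial : ℝ) ^ 2) :=
      summable_sr hm (mul_nonneg hδ ht.1.le)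
    rw [← tsum_mul_left]
    rw [ENNReal.ofReal_tsum_of_nonneg]
    · apply tsum_congr
      intro i
      congr 1
      rw [mul_pow]
      ring
    · intro i
      have h1 := rf_nonneg (Nat.cast_nonneg m) i
      have h2 : 0 ≤ (δ * t) ^ i := pow_nonneg (mul_nonneg hδ ht.1.le) i
      positivity
    · exact hsum.mul_left _
  rw [hmain, lintegral_tsum (fun i => (Measurable.ennreal_ofReal (by fun_prop)).aemeasurable)]
  apply tsum_congr
  intro i
  have hci : 0 ≤ α * rf (m:ℝ) i * δ ^ i / ((i.factorial:ℝ)) ^ 2 := by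
    have h1 := rf_nonneg (Nat.cast_nonneg m) i
    positivity
  have hcont : Continuous (fun t : ℝ => (α * rf (m:ℝ) i * δ ^ i / ((i.factorial:ℝ)) ^ 2)
      * (t ^ i * Real.exp (-β * t))) := by
    continuity
  rw [← MeasureTheory.ofReal_integral_eq_lintegral_ofReal
    (hcont.integrableOn_Ioc)
    ((ae_restrict_iff' measurableSet_Ioc).2 (ae_of_all _ (fun t ht => by
      have h2 : 0 ≤ t ^ i := pow_nonneg ht.1.le i
      positivity)))]
  rw [← intervalIntegral.integral_of_le hT, intervalIntegral.integral_const_mul,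
    integral_pow_exp' hβ hT i, ← tsum_mul_left]
  rw [ENNReal.ofReal_tsum_of_nonneg]
  · intro j
    have h1 : (0:ℝ) ≤ (i.factorial : ℝ) * β ^ j * T ^ (i + j + 1)
        / ((i + j + 1).factorial : ℝ) * Real.exp (-β * T) := by positivity
    positivity
  · exact (summable_tail i hβ.le hT).mul_left _

lemma measurable_gammaDensity (k η : ℝ) : Measurable (gammaDensity k η) := by
  unfold gammaDensity
  apply Measurable.ite measurableSet_Ioi _ measurable_const
  apply Measurable.div _ measurable_const
  exact (by fun_prop : Measurable fun y : ℝ => y ^ (k-1) * Real.exp (-y/η))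

lemma gammaDensity_nonneg {k η : ℝ} (hk : 0 < k) (hη : 0 < η) (y : ℝ) :
    0 ≤ gammaDensity k η y := by
  unfold gammaDensity
  split_ifs with h
  · have h1 : (0:ℝ) ≤ y ^ (k - 1) := Real.rpow_nonneg h.le _
    have h2 : 0 < Real.Gamma k := Real.Gamma_pos_of_pos hk
    have h3 : (0:ℝ) < η ^ k := Real.rpow_pos_of_pos hη k
    positivity
  · exact le_refl _

lemma gammaInt {k η a C : ℝ} (hk : 0 < k) (hη : 0 < η) (ha : 0 ≤ a) (hC : 0 ≤ C) (n : ℕ) :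
    ∫⁻ y in Ioi (0:ℝ), ENNReal.ofReal (gammaDensity k η y * (C * y ^ (n + 1) * Real.exp (-(a * y))))
      = ENNReal.ofReal (C / (Real.Gamma k * η ^ k) *
          ((1 / (a + 1 / η)) ^ (((n:ℝ) + 1) + k) * Real.Gamma (((n:ℝ) + 1) + k))) := by
  have hG : 0 < Real.Gamma k := Real.Gamma_pos_of_pos hk
  have hek : (0:ℝ) < η ^ k := Real.rpow_pos_of_pos hη k
  set lam := a + 1 / η with hlam
  have hlam0 : 0 < lam := by positivity
  set s : ℝ := ((n:ℝ) + 1) + k with hs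
  have hs0 : 0 < s := by positivity
  set K := C / (Real.Gamma k * η ^ k) with hK
  have hK0 : 0 ≤ K := by positivity
  have hpt : ∀ y ∈ Ioi (0:ℝ), ENNReal.ofReal (gammaDensity k η y * (C * y ^ (n + 1) * Real.exp (-(a * y))))
      = ENNReal.ofReal (K * (y ^ (s - 1) * Real.exp (-(lam * y)))) := by
    intro y hy
    rw [mem_Ioi] at hy
    congr 1
    rw [gammaDensity, if_pos hy]
    have h1 : y ^ ((n:ℕ) + 1) = y ^ ((((n:ℕ):ℝ) + 1) : ℝ) := by
      rw [← Real.rpow_natCast y (n + 1)]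
      norm_num
    have h2 : y ^ (k - 1) * y ^ ((((n:ℕ):ℝ) + 1) : ℝ) = y ^ (s - 1) := by
      rw [← Real.rpow_add hy]
      congr 1
      rw [hs]; ring
    have h3 : Real.exp (-y / η) * Real.exp (-(a * y)) = Real.exp (-(lam * y)) := by
      rw [← Real.exp_add]
      congr 1
      rw [hlam]; ring
    calc y ^ (k - 1) * Real.exp (-y / η) / (Real.Gamma k * η ^ k) * (C * y ^ (n + 1) * Real.exp (-(a * y)))
        = K * ((y ^ (k - 1) * y ^ ((((n:ℕ):ℝ) + 1) : ℝ)) * (Real.exp (-y / η) * Real.exp (-(a * y)))) := by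
          rw [← h1, hK]; ring
      _ = K * (y ^ (s - 1) * Real.exp (-(lam * y))) := by rw [h2, h3]
  rw [setLIntegral_congr_fun measurableSet_Ioi hpt]
  have hint0 : IntegrableOn (fun y : ℝ => y ^ (s - 1) * Real.exp (-(lam * y))) (Ioi 0) := by
    have := integrableOn_rpow_mul_exp_neg_mul_rpow (show (-1:ℝ) < s - 1 by linarith)
      (show (0:ℝ) < 1 by norm_num) hlam0
    apply this.congr_fun _ measurableSet_Ioi
    intro y _
    simp only [Real.rpow_one, neg_mul]
  have hint : IntegrableOn (fun y : ℝ => K * (y ^ (s - 1) * Real.exp (-(lam * y)))) (Ioi 0) :=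
    hint0.const_mul K
  rw [← MeasureTheory.ofReal_integral_eq_lintegral_ofReal hint
    ((ae_restrict_iff' measurableSet_Ioi).2 (ae_of_all _ (fun y hy => by
      have h1 : (0:ℝ) ≤ y ^ (s - 1) := Real.rpow_nonneg (le_of_lt hy) _
      positivity)))]
  rw [MeasureTheory.integral_const_mul, integral_rpow_mul_exp_neg_mul_Ioi hs0 hlam0]

/-- If `H` is shadowed-Rician, `I` an independent Gamma(k, η) random variable, and `c > 0`,
then for every `x ≥ 0` the CDF of `γ = cH/I` is the stated double series. -/
theorem stmt_7 {Ωs : Type*} [MeasurableSpace Ωs] (μ : Measure Ωs) [IsProbabilityMeasure μ]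
    (b Ωp α β δ : ℝ) (m : ℕ) (k η c : ℝ)
    (hb : 0 < b) (hΩ : 0 < Ωp) (hm : 0 < m)
    (hα : α = 1 / (2 * b) * ((2 * b * m) / (2 * b * m + Ωp)) ^ m)
    (hβ : β = 1 / (2 * b))
    (hδ : δ = Ωp / (2 * b * (2 * b * m + Ωp)))
    (hk : 0 < k) (hη : 0 < η) (hc : 0 < c)
    (H I : Ωs → ℝ) (hHm : Measurable H) (hIm : Measurable I)
    (hH : Measure.map H μ = volume.withDensity fun t => ENNReal.ofReal (srDensity α β δ m t))
    (hI : Measure.map I μ = volume.withDensity fun y => ENNReal.ofReal (gammaDensity k η y))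
    (hindep : IndepFun H I μ)
    (x : ℝ) (hx : 0 ≤ x) :
    (μ {ω | c * H ω / I ω ≤ x}).toReal
      = α / (Real.Gamma k * η ^ k) *
          ∑' i : ℕ, ∑' j : ℕ,
            rf (m : ℝ) i * δ ^ i * Real.Gamma ((i : ℝ) + 1)
                * Real.Gamma ((i : ℝ) + (j : ℝ) + k + 1)
              / (((i.factorial : ℝ)) ^ 2 * β ^ (i + 1) * Real.Gamma ((i : ℝ) + (j : ℝ) + 2))
              * (β * x / c) ^ (i + j + 1)
              * (β * x / c + 1 / η) ^ (-((i : ℝ) + (j : ℝ) + k + 1)) := by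

  -- basic positivity facts
  have hb2 : (0:ℝ) < 2 * b := by linarith
  have hbm : (0:ℝ) ≤ 2 * b * m := mul_nonneg hb2.le (Nat.cast_nonneg m)
  have hΩm : (0:ℝ) < 2 * b * m + Ωp := by linarith
  have hβ0 : 0 < β := hβ ▸ one_div_pos.mpr hb2
  have hδ0 : 0 ≤ δ := hδ ▸ div_nonneg hΩ.le (mul_nonneg hb2.le hΩm.le)
  have hα0 : 0 ≤ α := hα ▸ mul_nonneg (one_div_nonneg.2 hb2.le)
    (pow_nonneg (div_nonneg hbm hΩm.le) m)
  have hG : 0 < Real.Gamma k := Real.Gamma_pos_of_pos hk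
  have hek : (0:ℝ) < η ^ k := Real.rpow_pos_of_pos hη k
  have ha0 : (0:ℝ) ≤ β * x / c := div_nonneg (mul_nonneg hβ0.le hx) hc.le
  have hlam0 : (0:ℝ) < β * x / c + 1 / η := by positivity
  -- the constants
  set A : ℕ → ℝ := fun i => α * rf (m:ℝ) i * δ ^ i / ((i.factorial:ℝ)) ^ 2 with hA
  have hA0 : ∀ i, 0 ≤ A i := fun i => by
    have h1 := rf_nonneg (Nat.cast_nonneg m) i
    have h2 : (0:ℝ) < ((i.factorial:ℝ)) ^ 2 := by
      have := Nat.factorial_pos i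
      positivity
    positivity
  set C : ℕ → ℕ → ℝ := fun i j =>
    A i * ((i.factorial : ℝ) * β ^ j * (x / c) ^ (i + j + 1) / ((i + j + 1).factorial : ℝ)) with hC
  have hC0 : ∀ i j, 0 ≤ C i j := fun i j => by
    have h1 := hA0 i
    have h2 : (0:ℝ) ≤ (x / c) ^ (i + j + 1) := pow_nonneg (div_nonneg hx hc.le) _
    positivity
  set v : ℕ → ℕ → ℝ := fun i j =>
    C i j / (Real.Gamma k * η ^ k) *
      ((1 / (β * x / c + 1 / η)) ^ ((((i + j:ℕ):ℝ) + 1) + k)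
        * Real.Gamma ((((i + j:ℕ):ℝ) + 1) + k)) with hv
  have hv0 : ∀ i j, 0 ≤ v i j := fun i j => by
    have h1 := hC0 i j
    have h2 : (0:ℝ) ≤ (1 / (β * x / c + 1 / η)) ^ ((((i + j:ℕ):ℝ) + 1) + k) :=
      Real.rpow_nonneg (by positivity) _
    have h3 : (0:ℝ) ≤ Real.Gamma ((((i + j:ℕ):ℝ) + 1) + k) :=
      Real.Gamma_nonneg_of_nonneg (by positivity)
    positivity
  -- measures
  haveI hPH : IsProbabilityMeasure (volume.withDensity fun t => ENNReal.ofReal (srDensity α β δ m t)) := by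
    rw [← hH]; exact Measure.isProbabilityMeasure_map hHm.aemeasurable
  haveI hPI : IsProbabilityMeasure (volume.withDensity fun y => ENNReal.ofReal (gammaDensity k η y)) := by
    rw [← hI]; exact Measure.isProbabilityMeasure_map hIm.aemeasurable
  have hSmeas : MeasurableSet {p : ℝ × ℝ | c * p.1 / p.2 ≤ x} :=
    measurableSet_le (by fun_prop) measurable_const
  -- step 1 : product measure
  have h1 : μ {ω | c * H ω / I ω ≤ x}
      = ((volume.withDensity fun t => ENNReal.ofReal (srDensity α β δ m t)).prod
          (volume.withDensity fun y => ENNReal.ofReal (gammaDensity k η y)))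
          {p : ℝ × ℝ | c * p.1 / p.2 ≤ x} := by
    have hmap : Measure.map (fun ω => (H ω, I ω)) μ
        = (Measure.map H μ).prod (Measure.map I μ) :=
      (indepFun_iff_map_prod_eq_prod_map_map hHm.aemeasurable hIm.aemeasurable).mp hindep
    rw [show {ω | c * H ω / I ω ≤ x} = (fun ω => (H ω, I ω)) ⁻¹' {p : ℝ × ℝ | c * p.1 / p.2 ≤ x}
      from rfl, ← Measure.map_apply (hHm.prodMk hIm) hSmeas, hmap, hH, hI]
  -- step 2 : iterated integral
  have h2 : μ {ω | c * H ω / I ω ≤ x}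
      = ∫⁻ y, ENNReal.ofReal (gammaDensity k η y) *
          (volume.withDensity fun t => ENNReal.ofReal (srDensity α β δ m t))
            ((fun t => (t, y)) ⁻¹' {p : ℝ × ℝ | c * p.1 / p.2 ≤ x}) ∂volume := by
    rw [h1, Measure.prod_apply_symm hSmeas,
      lintegral_withDensity_eq_lintegral_mul_non_measurable volume
        (measurable_gammaDensity k η).ennreal_ofReal
        (ae_of_all _ fun y => ENNReal.ofReal_lt_top) _]
    rfl
  -- step 3 : restrict to positive y and compute inner measure
  have h3 : μ {ω | c * H ω / I ω ≤ x}
      = ∫⁻ y in Ioi (0:ℝ), ∑' (i : ℕ) (j : ℕ),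
          ENNReal.ofReal (gammaDensity k η y *
            (C i j * y ^ (i + j + 1) * Real.exp (-(β * x / c * y)))) ∂volume := by
    rw [h2, ← lintegral_indicator measurableSet_Ioi]
    apply lintegral_congr
    intro y
    by_cases hy : y ∈ Ioi (0:ℝ)
    · rw [indicator_of_mem hy]
      rw [mem_Ioi] at hy
      have hpre : (fun t => (t, y)) ⁻¹' {p : ℝ × ℝ | c * p.1 / p.2 ≤ x} = Iic (x * y / c) := by
        ext t
        simp only [mem_preimage, mem_setOf_eq, mem_Iic]
        rw [div_le_iff₀ hy, le_div_iff₀ hc]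
        constructor <;> intro h <;> linarith
      have hT : (0:ℝ) ≤ x * y / c := div_nonneg (mul_nonneg hx hy.le) hc.le
      rw [hpre, srCDF hα0 hβ0 hδ0 hm hT, ← ENNReal.tsum_mul_left]
      apply tsum_congr
      intro i
      rw [← ENNReal.tsum_mul_left]
      apply tsum_congr
      intro j
      rw [← ENNReal.ofReal_mul (gammaDensity_nonneg hk hη y)]
      congr 1
      rw [show -β * (x * y / c) = -(β * x / c * y) by ring,
        show x * y / c = x / c * y by ring, mul_pow]
      simp only [hC, hA]
      ring
    · rw [indicator_of_notMem hy]
      rw [mem_Ioi, not_lt] at hy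
      have hgd : gammaDensity k η y = 0 := by rw [gammaDensity, if_neg (not_lt.2 hy)]
      rw [hgd, ENNReal.ofReal_zero, zero_mul]
  -- step 4 : swap sums and integral, evaluate
  have key : μ {ω | c * H ω / I ω ≤ x} = ∑' (i : ℕ) (j : ℕ), ENNReal.ofReal (v i j) := by
    rw [h3, lintegral_tsum (f := fun i y => ∑' j : ℕ, ENNReal.ofReal (gammaDensity k η y *
        (C i j * y ^ (i + j + 1) * Real.exp (-(β * x / c * y))))) (fun i => Measurable.aemeasurable (Measurable.ennreal_tsum
      (fun j => ((measurable_gammaDensity k η).mul (by fun_prop)).ennreal_ofReal)))]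
    apply tsum_congr
    intro i
    rw [lintegral_tsum (fun j => Measurable.aemeasurable (by
      apply Measurable.ennreal_ofReal
      exact ((measurable_gammaDensity k η).mul (by fun_prop))))]
    apply tsum_congr
    intro j
    exact gammaInt hk hη ha0 (hC0 i j) (i + j)
  -- step 5 : take toReal
  rw [key]
  have hktop : (∑' (i : ℕ) (j : ℕ), ENNReal.ofReal (v i j)) ≠ ⊤ := key ▸ measure_ne_top μ _
  have htop : ∀ i, (∑' j : ℕ, ENNReal.ofReal (v i j)) ≠ ⊤ := fun i =>
    ne_top_of_le_ne_top hktop (ENNReal.le_tsum i)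
  rw [ENNReal.tsum_toReal_eq htop]
  have hinner : ∀ i : ℕ, (∑' j : ℕ, ENNReal.ofReal (v i j)).toReal = ∑' j : ℕ, v i j := by
    intro i
    rw [ENNReal.tsum_toReal_eq (fun j => ENNReal.ofReal_ne_top)]
    exact tsum_congr fun j => ENNReal.toReal_ofReal (hv0 i j)
  rw [tsum_congr hinner, ← tsum_mul_left]
  apply tsum_congr
  intro i
  rw [← tsum_mul_left]
  apply tsum_congr
  intro j
  -- final algebraic identification
  simp only [hv, hC, hA]
  rw [Real.Gamma_nat_eq_factorial i,
    show (i:ℝ) + (j:ℝ) + 2 = ((i + j + 1 : ℕ):ℝ) + 1 by push_cast; ring,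
    Real.Gamma_nat_eq_factorial (i + j + 1),
    show (i:ℝ) + (j:ℝ) + k + 1 = (((i + j:ℕ):ℝ) + 1) + k by push_cast; ring,
    Real.rpow_neg hlam0.le, ← Real.inv_rpow hlam0.le, ← one_div,
    show β * x / c = β * (x / c) by ring, mul_pow,
    show i + j + 1 = (i + 1) + j by omega, pow_add β]
  have hne1 : ((i.factorial:ℝ)) ≠ 0 := Nat.cast_ne_zero.2 (Nat.factorial_ne_zero _)
  have hne2 : (((i + 1 + j).factorial:ℝ)) ≠ 0 := Nat.cast_ne_zero.2 (Nat.factorial_ne_zero _)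
  have hne3 : β ≠ 0 := hβ0.ne'
  have hne4 : Real.Gamma k ≠ 0 := hG.ne'
  have hne5 : (η:ℝ) ^ k ≠ 0 := hek.ne'
  field_simp
  ring
end

section
/- Let H be a random variable with the shadowed-Rician density f_H (parameters b, Ω, m, α, β, δ). Then lim_{x→0⁺} P(H ≤ x)/x = α; i.e., the shadowed-Rician CDF is asymptotically linear with slope α at the origin. -/
open MeasureTheory

lemma rf_nonneg_s11 (m : ℕ) (i : ℕ) : 0 ≤ rf (m : ℝ) i := by
  induction i with
  | zero => simp [rf]
  | succ n ih =>
      have : (0:ℝ) ≤ (m:ℝ) + n := by positivity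
      simpa [rf] using mul_nonneg ih this

lemma rf_le_fact (m : ℕ) (hm : 0 < m) (i : ℕ) :
    rf (m : ℝ) i ≤ (m : ℝ) ^ i * (i.factorial : ℝ) := by
  induction i with
  | zero => simp [rf]
  | succ n ih =>
      have h1 : (1:ℝ) ≤ (m:ℝ) := by exact_mod_cast hm
      have h2 : ((m:ℝ) + n) ≤ (m:ℝ) * (n + 1) := by nlinarith
      have hrf := rf_nonneg_s11 m n
      have hmn : (0:ℝ) ≤ (m:ℝ) + n := by positivity
      calc rf (m:ℝ) (n+1) = rf (m:ℝ) n * ((m:ℝ) + n) := rfl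
        _ ≤ ((m:ℝ)^n * n.factorial) * ((m:ℝ) * (n+1)) := by
            apply mul_le_mul ih h2 hmn; positivity
        _ = (m:ℝ)^(n+1) * ((n+1).factorial : ℝ) := by
            push_cast [Nat.factorial_succ]; ring

lemma sr_summable (m : ℕ) (hm : 0 < m) (u : ℝ) (hu : 0 ≤ u) :
    Summable (fun i : ℕ => rf (m : ℝ) i * u ^ i / ((i.factorial : ℝ)) ^ 2) := by
  apply Summable.of_nonneg_of_le
    (fun i => by
      have := rf_nonneg_s11 m i
      positivity)
    (fun i => ?_)
    (Real.summable_pow_div_factorial ((m:ℝ) * u))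
  have := rf_le_fact m hm i
  have hfi : (0:ℝ) < (i.factorial : ℝ) := by exact_mod_cast i.factorial_pos
  calc rf (m:ℝ) i * u ^ i / (i.factorial : ℝ)^2
      ≤ ((m:ℝ)^i * i.factorial) * u ^ i / (i.factorial : ℝ)^2 := by gcongr
    _ = ((m:ℝ) * u)^i / i.factorial := by
        rw [mul_pow]; field_simp

lemma shift_summable (m : ℕ) (hm : 0 < m) :
    Summable (fun i : ℕ => rf (m : ℝ) (i+1) / (((i+1).factorial : ℝ)) ^ 2) := by
  have h := (summable_nat_add_iff 1).mpr (sr_summable m hm 1 zero_le_one)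
  simpa using h

lemma one_le_S (m : ℕ) (hm : 0 < m) (u : ℝ) (hu : 0 ≤ u) :
    1 ≤ ∑' i : ℕ, rf (m : ℝ) i * u ^ i / ((i.factorial : ℝ)) ^ 2 := by
  have h := Summable.le_tsum (sr_summable m hm u hu) 0
    (fun i _ => by have := rf_nonneg_s11 m i; positivity)
  simpa [rf] using h

lemma S_le (m : ℕ) (hm : 0 < m) (u : ℝ) (hu : 0 ≤ u) (hu1 : u ≤ 1) :
    (∑' i : ℕ, rf (m : ℝ) i * u ^ i / ((i.factorial : ℝ)) ^ 2)
      ≤ 1 + (∑' i : ℕ, rf (m : ℝ) (i+1) / (((i+1).factorial : ℝ)) ^ 2) * u := by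
  have hsum := sr_summable m hm u hu
  rw [Summable.tsum_eq_zero_add hsum]
  have h0 : rf (m:ℝ) 0 * u ^ 0 / ((Nat.factorial 0 : ℝ))^2 = 1 := by simp [rf]
  rw [h0]
  gcongr 1 + ?_
  have hshift : Summable (fun i : ℕ => rf (m : ℝ) (i+1) * u ^ (i+1) / (((i+1).factorial : ℝ)) ^ 2) := by
    simpa using (summable_nat_add_iff 1).mpr hsum
  calc (∑' i : ℕ, rf (m : ℝ) (i+1) * u ^ (i+1) / (((i+1).factorial : ℝ)) ^ 2)
      ≤ ∑' i : ℕ, (rf (m : ℝ) (i+1) / (((i+1).factorial : ℝ)) ^ 2) * u := by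
        apply Summable.tsum_le_tsum _ hshift ((shift_summable m hm).mul_right u)
        intro i
        have hle : u ^ (i+1) ≤ u := by
          simpa using pow_le_pow_of_le_one hu hu1 (Nat.one_le_iff_ne_zero.mpr (Nat.succ_ne_zero i))
        have := rf_nonneg_s11 m (i+1)
        have hf : (0:ℝ) < (((i+1).factorial : ℝ))^2 := by positivity
        calc rf (m : ℝ) (i+1) * u ^ (i+1) / (((i+1).factorial : ℝ)) ^ 2
            ≤ rf (m : ℝ) (i+1) * u / (((i+1).factorial : ℝ)) ^ 2 := by gcongr
          _ = (rf (m : ℝ) (i+1) / (((i+1).factorial : ℝ)) ^ 2) * u := by ring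
    _ = (∑' i : ℕ, rf (m : ℝ) (i+1) / (((i+1).factorial : ℝ)) ^ 2) * u := tsum_mul_right

/-- If `H` has the shadowed-Rician density, then `lim_{x→0⁺} P(H ≤ x)/x = α`: the
shadowed-Rician CDF is asymptotically linear with slope `α` at the origin. -/
theorem stmt_11 {Ωs : Type*} [MeasurableSpace Ωs] (μ : Measure Ωs) [IsProbabilityMeasure μ]
    (b Ωp α β δ : ℝ) (m : ℕ)
    (hb : 0 < b) (hΩ : 0 < Ωp) (hm : 0 < m)
    (hα : α = 1 / (2 * b) * ((2 * b * m) / (2 * b * m + Ωp)) ^ m)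
    (hβ : β = 1 / (2 * b))
    (hδ : δ = Ωp / (2 * b * (2 * b * m + Ωp)))
    (H : Ωs → ℝ) (hHm : Measurable H)
    (hH : Measure.map H μ = volume.withDensity fun t => ENNReal.ofReal (srDensity α β δ m t)) :
    Filter.Tendsto (fun x : ℝ => (μ {ω | H ω ≤ x}).toReal / x)
      (nhdsWithin 0 (Set.Ioi 0)) (nhds α) := by
  have hm0 : (0:ℝ) < m := by exact_mod_cast hm
  have hα0 : 0 ≤ α := by rw [hα]; positivity
  have hβ0 : 0 ≤ β := by rw [hβ]; positivity
  have hδ0 : 0 ≤ δ := by rw [hδ]; positivity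
  set C := ∑' i : ℕ, rf (m : ℝ) (i+1) / (((i+1).factorial : ℝ)) ^ 2 with hCdef
  have hC0 : 0 ≤ C := tsum_nonneg (fun i => by
    have := rf_nonneg_s11 m (i+1); positivity)
  have hμeq : ∀ x : ℝ, μ {ω | H ω ≤ x}
      = ∫⁻ t in Set.Iic x, ENNReal.ofReal (srDensity α β δ m t) := by
    intro x
    have hset : {ω | H ω ≤ x} = H ⁻¹' Set.Iic x := rfl
    rw [hset, ← Measure.map_apply hHm measurableSet_Iic, hH,
      withDensity_apply _ measurableSet_Iic]
  have key : ∀ x : ℝ, 0 < x → δ * x ≤ 1 →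
      α * Real.exp (-β*x) ≤ (μ {ω | H ω ≤ x}).toReal / x ∧
      (μ {ω | H ω ≤ x}).toReal / x ≤ α * (1 + C * (δ * x)) := by
    intro x hx hδx
    set c1 := α * Real.exp (-β*x) with hc1def
    set c2 := α * (1 + C * (δ * x)) with hc2def
    have hc1 : 0 ≤ c1 := by positivity
    have hc2 : 0 ≤ c2 := by positivity
    -- pointwise bounds on the density
    have hlb : ∀ t ∈ Set.Ioc (0:ℝ) x, c1 ≤ srDensity α β δ m t := by
      intro t ht
      have ht0 : 0 < t := ht.1
      have htx : t ≤ x := ht.2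
      rw [srDensity, if_pos ht0]
      have hS : 1 ≤ ∑' i : ℕ, rf (m : ℝ) i * (δ * t) ^ i / ((i.factorial : ℝ)) ^ 2 :=
        one_le_S m hm (δ * t) (by positivity)
      have hexp : Real.exp (-β*x) ≤ Real.exp (-β*t) :=
        Real.exp_le_exp.mpr (by nlinarith)
      calc c1 ≤ α * Real.exp (-β*t) := by rw [hc1def]; gcongr
        _ = α * Real.exp (-β*t) * 1 := by ring
        _ ≤ _ := by gcongr
    have hub : ∀ t ∈ Set.Ioc (0:ℝ) x, srDensity α β δ m t ≤ c2 := by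
      intro t ht
      have ht0 : 0 < t := ht.1
      have htx : t ≤ x := ht.2
      rw [srDensity, if_pos ht0]
      have hδt1 : δ * t ≤ 1 := le_trans (by nlinarith) hδx
      have hS : (∑' i : ℕ, rf (m : ℝ) i * (δ * t) ^ i / ((i.factorial : ℝ)) ^ 2)
          ≤ 1 + C * (δ * x) := by
        refine le_trans (S_le m hm (δ * t) (by positivity) hδt1) ?_
        have : C * (δ * t) ≤ C * (δ * x) := by
          apply mul_le_mul_of_nonneg_left (by nlinarith) hC0
        rw [hCdef]; nlinarith [this]
      have hexp : Real.exp (-β*t) ≤ 1 := Real.exp_le_one_iff.mpr (by nlinarith)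
      have hSnn : (0:ℝ) ≤ ∑' i : ℕ, rf (m : ℝ) i * (δ * t) ^ i / ((i.factorial : ℝ)) ^ 2 :=
        le_trans zero_le_one (one_le_S m hm (δ * t) (by positivity))
      calc α * Real.exp (-β*t) * (∑' i : ℕ, rf (m : ℝ) i * (δ * t) ^ i / ((i.factorial : ℝ)) ^ 2)
          ≤ α * 1 * (1 + C * (δ * x)) := by gcongr
        _ = c2 := by rw [hc2def]; ring
    -- indicator inequalities
    have hind1 : ∀ t, (Set.Ioc (0:ℝ) x).indicator (fun _ => ENNReal.ofReal c1) t
        ≤ (Set.Iic x).indicator (fun t => ENNReal.ofReal (srDensity α β δ m t)) t := by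
      intro t
      by_cases ht : t ∈ Set.Ioc (0:ℝ) x
      · rw [Set.indicator_of_mem ht, Set.indicator_of_mem (Set.mem_Iic.mpr ht.2)]
        exact ENNReal.ofReal_le_ofReal (hlb t ht)
      · rw [Set.indicator_of_notMem ht]; exact zero_le
    have hind2 : ∀ t, (Set.Iic x).indicator (fun t => ENNReal.ofReal (srDensity α β δ m t)) t
        ≤ (Set.Ioc (0:ℝ) x).indicator (fun _ => ENNReal.ofReal c2) t := by
      intro t
      by_cases ht : t ∈ Set.Iic x
      · rw [Set.indicator_of_mem ht]
        by_cases ht0 : 0 < t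
        · rw [Set.indicator_of_mem (Set.mem_Ioc.mpr ⟨ht0, ht⟩)]
          exact ENNReal.ofReal_le_ofReal (hub t ⟨ht0, ht⟩)
        · rw [srDensity, if_neg ht0]; simp
      · rw [Set.indicator_of_notMem ht]; exact zero_le
    have hconst : ∀ c : ℝ, (∫⁻ t, (Set.Ioc (0:ℝ) x).indicator (fun _ => ENNReal.ofReal c) t ∂volume)
        = ENNReal.ofReal c * ENNReal.ofReal x := by
      intro c
      rw [lintegral_indicator measurableSet_Ioc _, setLIntegral_const, Real.volume_Ioc]
      simp
    have hIic : (∫⁻ t in Set.Iic x, ENNReal.ofReal (srDensity α β δ m t) ∂volume)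
        = ∫⁻ t, (Set.Iic x).indicator (fun t => ENNReal.ofReal (srDensity α β δ m t)) t ∂volume :=
      (lintegral_indicator measurableSet_Iic _).symm
    have hlow : ENNReal.ofReal c1 * ENNReal.ofReal x ≤ μ {ω | H ω ≤ x} := by
      rw [hμeq x, hIic, ← hconst c1]
      exact lintegral_mono hind1
    have hup : μ {ω | H ω ≤ x} ≤ ENNReal.ofReal c2 * ENNReal.ofReal x := by
      rw [hμeq x, hIic, ← hconst c2]
      exact lintegral_mono hind2
    have hne : μ {ω | H ω ≤ x} ≠ ⊤ := measure_ne_top μ _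
    have h1r : c1 * x ≤ (μ {ω | H ω ≤ x}).toReal := by
      have := ENNReal.toReal_mono hne hlow
      rwa [← ENNReal.ofReal_mul hc1, ENNReal.toReal_ofReal (by positivity)] at this
    have h2r : (μ {ω | H ω ≤ x}).toReal ≤ c2 * x := by
      have hfin : ENNReal.ofReal c2 * ENNReal.ofReal x ≠ ⊤ := by
        rw [← ENNReal.ofReal_mul hc2]; exact ENNReal.ofReal_ne_top
      have := ENNReal.toReal_mono hfin hup
      rwa [← ENNReal.ofReal_mul hc2, ENNReal.toReal_ofReal (by positivity)] at this
    exact ⟨(le_div_iff₀ hx).mpr h1r, (div_le_iff₀ hx).mpr h2r⟩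
  have hev1 : ∀ᶠ x in nhdsWithin (0:ℝ) (Set.Ioi 0), δ * x ≤ 1 := by
    have ht : Filter.Tendsto (fun x : ℝ => δ * x) (nhdsWithin (0:ℝ) (Set.Ioi 0)) (nhds 0) := by
      have : Continuous fun x : ℝ => δ * x := by fun_prop
      simpa using (this.tendsto 0).mono_left nhdsWithin_le_nhds
    exact (ht.eventually_lt_const one_pos).mono (fun x h => le_of_lt h)
  have hgl : Filter.Tendsto (fun x : ℝ => α * Real.exp (-β*x))
      (nhdsWithin (0:ℝ) (Set.Ioi 0)) (nhds α) := by
    have hc : Continuous fun x : ℝ => α * Real.exp (-β*x) := by fun_prop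
    have := (hc.tendsto 0).mono_left (nhdsWithin_le_nhds (s := Set.Ioi (0:ℝ)))
    simpa using this
  have hgu : Filter.Tendsto (fun x : ℝ => α * (1 + C * (δ * x)))
      (nhdsWithin (0:ℝ) (Set.Ioi 0)) (nhds α) := by
    have hc : Continuous fun x : ℝ => α * (1 + C * (δ * x)) := by fun_prop
    have := (hc.tendsto 0).mono_left (nhdsWithin_le_nhds (s := Set.Ioi (0:ℝ)))
    simpa using this
  refine tendsto_of_tendsto_of_tendsto_of_le_of_le' hgl hgu ?_ ?_
  · filter_upwards [hev1, self_mem_nhdsWithin] with x h1 h2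
    exact (key x h2 h1).1
  · filter_upwards [hev1, self_mem_nhdsWithin] with x h1 h2
    exact (key x h2 h1).2
end
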